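/- Let 1 ≤ d < n be integers and let α > d/2 and β > (n−d)/2 satisfy d/(2α) + (n−d)/(2β) < 1. Then the series Σ over pairs (m_I, m_II) with m_I ∈ ℤ^d ∖ {0} and m_II ∈ ℤ^{n−d} ∖ {0} of (‖m_I‖^{2α} + ‖m_II‖^{2β})^{−1} converges, where ‖·‖ is the Euclidean norm. -/

import Mathlib

/-- Euclidean norm of a vector in `ℝ^m`. -/
noncomputable def euclNorm {m : ℕ} (x : Fin m → ℝ) : ℝ :=
  ‖(EuclideanSpace.equiv (Fin m) ℝ).symm x‖

namespace Stmt13Aux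

noncomputable def g (q : ℝ) (k : ℤ) : ℝ := (max |(k : ℝ)| 1) ^ (-q)

lemma g_nonneg (q : ℝ) (k : ℤ) : 0 ≤ g q k :=
  Real.rpow_nonneg (le_trans zero_le_one (le_max_right _ _)) _

lemma summable_g {q : ℝ} (hq : 1 < q) : Summable (g q) := by
  have h := Real.summable_abs_int_rpow hq
  have : g q = Function.update (fun k : ℤ => |(k : ℝ)| ^ (-q)) 0 1 := by
    funext k
    rcases eq_or_ne k 0 with rfl | hk
    · simp [g]
    · rw [Function.update_of_ne hk]
      have h1 : (1 : ℝ) ≤ |(k : ℝ)| := by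
        rw [← Int.cast_abs]; exact_mod_cast Int.one_le_abs hk
      simp [g, max_eq_left h1]
  rw [this]
  exact h.update 0 1

lemma summable_pi_prod {q : ℝ} (hq : 1 < q) (d : ℕ) :
    Summable fun v : Fin d → ℤ => ∏ i, g q (v i) := by
  induction d with
  | zero => exact summable_of_finite_support (Set.toFinite _)
  | succ d ih =>
      have key : Summable fun p : ℤ × (Fin d → ℤ) => g q p.1 * ∏ i, g q (p.2 i) :=
        Summable.mul_of_nonneg (f := g q) (g := fun v : Fin d → ℤ => ∏ i, g q (v i))
          (summable_g hq) ih (g_nonneg q) (fun _ => Finset.prod_nonneg fun _ _ => g_nonneg _ _)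
      rw [← (Fin.consEquiv fun _ : Fin (d + 1) => ℤ).summable_iff]
      refine key.congr fun p => ?_
      simp [Fin.consEquiv, Fin.prod_univ_succ]

lemma euclNorm_eq {n : ℕ} (x : Fin n → ℝ) :
    euclNorm x = Real.sqrt (∑ j, x j ^ 2) := by
  simp [euclNorm, EuclideanSpace.norm_eq, Real.norm_eq_abs, sq_abs]

lemma abs_le_euclNorm {n : ℕ} (x : Fin n → ℝ) (i : Fin n) : |x i| ≤ euclNorm x := by
  rw [euclNorm_eq, ← Real.sqrt_sq_eq_abs]
  exact Real.sqrt_le_sqrt (Finset.single_le_sum (f := fun j => x j ^ 2)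
    (fun j _ => sq_nonneg _) (Finset.mem_univ i))

lemma euclNorm_nonneg {n : ℕ} (x : Fin n → ℝ) : 0 ≤ euclNorm x := norm_nonneg _

lemma one_le_euclNorm {n : ℕ} (v : Fin n → ℤ) (hv : v ≠ 0) :
    1 ≤ euclNorm (fun i => (v i : ℝ)) := by
  obtain ⟨i, hi⟩ := Function.ne_iff.1 hv
  have h1 : (1 : ℝ) ≤ |(v i : ℝ)| := by
    rw [← Int.cast_abs]; exact_mod_cast Int.one_le_abs hi
  exact h1.trans (abs_le_euclNorm (fun j => (v j : ℝ)) i)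

lemma max_le_euclNorm {n : ℕ} (v : Fin n → ℤ) (hv : v ≠ 0) (i : Fin n) :
    max |(v i : ℝ)| 1 ≤ euclNorm (fun j => (v j : ℝ)) :=
  max_le (abs_le_euclNorm (fun j => (v j : ℝ)) i) (one_le_euclNorm v hv)

lemma prod_bound {d : ℕ} {q : ℝ} (hq : 0 ≤ q) (v : Fin d → ℤ) (hv : v ≠ 0) :
    euclNorm (fun i => (v i : ℝ)) ^ (-(q * d)) ≤ ∏ i, g q (v i) := by
  set N := euclNorm (fun i => (v i : ℝ)) with hN
  have hN1 : 1 ≤ N := one_le_euclNorm v hv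
  have hN0 : 0 ≤ N := zero_le_one.trans hN1
  have step1 : N ^ (-(q * d)) = ∏ _i : Fin d, N ^ (-q) := by
    rw [Finset.prod_const, Finset.card_univ, Fintype.card_fin,
      ← Real.rpow_natCast (N ^ (-q)) d, ← Real.rpow_mul hN0, neg_mul]
  rw [step1]
  refine Finset.prod_le_prod (fun i _ => Real.rpow_nonneg hN0 _) (fun i _ => ?_)
  exact Real.rpow_le_rpow_of_nonpos (lt_of_lt_of_le zero_lt_one (le_max_right _ _))
    (max_le_euclNorm v hv i) (neg_nonpos.2 hq)

end Stmt13Aux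

open Stmt13Aux

/-- for `α > d/2`, `β > (n-d)/2` with `d/(2α) + (n-d)/(2β) < 1`, the series
`Σ_{m_I ≠ 0, m_II ≠ 0} (‖m_I‖^(2α) + ‖m_II‖^(2β))⁻¹` over pairs of nonzero integer
vectors converges. -/
theorem stmt13 (d m : ℕ) (hd : 1 ≤ d) (hm : 1 ≤ m) (α β : ℝ)
    (hα : (d : ℝ) / 2 < α) (hβ : (m : ℝ) / 2 < β)
    (hcond : (d : ℝ) / (2 * α) + (m : ℝ) / (2 * β) < 1) :
    Summable fun p : {p : (Fin d → ℤ) × (Fin m → ℤ) // p.1 ≠ 0 ∧ p.2 ≠ 0} =>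
      (euclNorm (fun i => ((p : (Fin d → ℤ) × (Fin m → ℤ)).1 i : ℝ)) ^ (2 * α) +
        euclNorm (fun j => ((p : (Fin d → ℤ) × (Fin m → ℤ)).2 j : ℝ)) ^ (2 * β))⁻¹ := by
  have hd0 : (0 : ℝ) < d := by exact_mod_cast hd
  have hm0 : (0 : ℝ) < m := by exact_mod_cast hm
  have hα0 : (0 : ℝ) < α := lt_trans (by positivity) hα
  have hβ0 : (0 : ℝ) < β := lt_trans (by positivity) hβ
  set δ : ℝ := (1 - ((d : ℝ) / (2 * α) + (m : ℝ) / (2 * β))) / 2 with hδ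
  have hδ0 : 0 < δ := by simp only [hδ]; linarith
  set s : ℝ := (d : ℝ) / (2 * α) + δ with hsdef
  set t : ℝ := (m : ℝ) / (2 * β) + δ with htdef
  have hs0 : 0 < s := by positivity
  have ht0 : 0 < t := by positivity
  have hst : s + t = 1 := by simp only [hsdef, htdef, hδ]; ring
  have hs1 : s ≤ 1 := by linarith
  have ht1 : t ≤ 1 := by linarith
  have hsd : (d : ℝ) / (2 * α) < s := by linarith
  have htm : (m : ℝ) / (2 * β) < t := by linarith
  set q1 : ℝ := 2 * α * s / d with hq1def
  set q2 : ℝ := 2 * β * t / m with hq2def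
  have hq1 : 1 < q1 := by
    rw [hq1def, lt_div_iff₀ hd0, one_mul]
    rw [div_lt_iff₀ (by positivity)] at hsd; linarith
  have hq2 : 1 < q2 := by
    rw [hq2def, lt_div_iff₀ hm0, one_mul]
    rw [div_lt_iff₀ (by positivity)] at htm; linarith
  have hq1d : q1 * (d : ℝ) = 2 * α * s := by
    rw [hq1def, div_mul_cancel₀ _ (ne_of_gt hd0)]
  have hq2m : q2 * (m : ℝ) = 2 * β * t := by
    rw [hq2def, div_mul_cancel₀ _ (ne_of_gt hm0)]
  -- dominating summable function
  have hdom : Summable fun p : (Fin d → ℤ) × (Fin m → ℤ) =>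
      (∏ i, g q1 (p.1 i)) * ∏ j, g q2 (p.2 j) :=
    Summable.mul_of_nonneg (f := fun v : Fin d → ℤ => ∏ i, g q1 (v i))
      (g := fun w : Fin m → ℤ => ∏ j, g q2 (w j))
      (summable_pi_prod hq1 d) (summable_pi_prod hq2 m)
      (fun _ => Finset.prod_nonneg fun _ _ => g_nonneg _ _)
      (fun _ => Finset.prod_nonneg fun _ _ => g_nonneg _ _)
  have hdom' := hdom.subtype {p : (Fin d → ℤ) × (Fin m → ℤ) | p.1 ≠ 0 ∧ p.2 ≠ 0}
  refine Summable.of_nonneg_of_le (fun p => inv_nonneg.2 (add_nonneg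
    (Real.rpow_nonneg (euclNorm_nonneg _) _) (Real.rpow_nonneg (euclNorm_nonneg _) _)))
    (fun p => ?_) hdom'
  obtain ⟨⟨v, w⟩, hv, hw⟩ := p
  simp only [Function.comp_apply]
  set N1 := euclNorm (fun i => (v i : ℝ)) with hN1def
  set N2 := euclNorm (fun j => (w j : ℝ)) with hN2def
  have hN1ge : 1 ≤ N1 := one_le_euclNorm v hv
  have hN2ge : 1 ≤ N2 := one_le_euclNorm w hw
  have hN10 : 0 ≤ N1 := zero_le_one.trans hN1ge
  have hN20 : 0 ≤ N2 := zero_le_one.trans hN2ge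
  set A : ℝ := N1 ^ (2 * α) with hAdef
  set B : ℝ := N2 ^ (2 * β) with hBdef
  have hA1 : 1 ≤ A := Real.one_le_rpow hN1ge (by positivity)
  have hB1 : 1 ≤ B := Real.one_le_rpow hN2ge (by positivity)
  have hA0 : 0 < A := lt_of_lt_of_le zero_lt_one hA1
  have hB0 : 0 < B := lt_of_lt_of_le zero_lt_one hB1
  have key1 : A ^ s * B ^ t ≤ A + B := by
    calc A ^ s * B ^ t ≤ s * A + t * B :=
          Real.geom_mean_le_arith_mean2_weighted hs0.le ht0.le hA0.le hB0.le hst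
      _ ≤ A + B := by nlinarith
  have hABpos : 0 < A ^ s * B ^ t := by positivity
  have key2 : (A + B)⁻¹ ≤ A ^ (-s) * B ^ (-t) := by
    rw [Real.rpow_neg hA0.le, Real.rpow_neg hB0.le, ← mul_inv]
    exact inv_anti₀ hABpos key1
  have key3 : A ^ (-s) = N1 ^ (-(q1 * (d : ℝ))) := by
    rw [hAdef, ← Real.rpow_mul hN10, hq1d]; ring_nf
  have key4 : B ^ (-t) = N2 ^ (-(q2 * (m : ℝ))) := by
    rw [hBdef, ← Real.rpow_mul hN20, hq2m]; ring_nf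
  calc (A + B)⁻¹ ≤ A ^ (-s) * B ^ (-t) := key2
    _ = N1 ^ (-(q1 * (d : ℝ))) * N2 ^ (-(q2 * (m : ℝ))) := by rw [key3, key4]
    _ ≤ (∏ i, g q1 (v i)) * ∏ j, g q2 (w j) := by
        exact mul_le_mul (prod_bound (by linarith : (0:ℝ) ≤ q1) v hv)
          (prod_bound (by linarith : (0:ℝ) ≤ q2) w hw)
          (Real.rpow_nonneg hN20 _)
          (Finset.prod_nonneg fun _ _ => g_nonneg _ _)
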